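/- arXiv:1209.4056 — 3 statements merged into one kernel-verified Lean document; each statement's English description precedes it below -/
import Mathlib

section
/- Main structural lemma (lower bound on violated-edge mass): if f : {0,1}^d → δℤ is ε-far from Lipschitz with respect to a product Bernoulli distribution Π on {0,1}^d (meaning every Lipschitz g : {0,1}^d → ℝ satisfies Pr_{x∼Π}[f(x) ≠ g(x)] ≥ ε), then Σ over violated edges {x,y} of (p_x + p_y)/d ≥ δ(ε − d²δ)/(d · ImD(f)). -/
open scoped Classical

/-- The probability mass of a vertex `x ∈ {0,1}^d` under the product Bernoulli
distribution `Ber(p 1) × ⋯ × Ber(p d)`. -/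
def vmass {d : ℕ} (p : Fin d → ℝ) (x : Fin d → Bool) : ℝ :=
  ∏ i, if x i then p i else 1 - p i

/-- Image diameter of a function on the hypercube: `max f - min f`. -/
noncomputable def ImD {d : ℕ} (f : (Fin d → Bool) → ℝ) : ℝ :=
  Finset.univ.sup' Finset.univ_nonempty f - Finset.univ.inf' Finset.univ_nonempty f

namespace VEMLB

/-- clamp to `[-1,1]` -/
noncomputable def clp (s : ℝ) : ℝ := max (-1) (min 1 s)

/-- excess beyond the clamp -/
noncomputable def exc (s : ℝ) : ℝ := s - clp s

/-- `(|s|-1)₊` -/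
noncomputable def phi (s : ℝ) : ℝ := max (|s| - 1) 0

lemma phi_nonneg (s : ℝ) : 0 ≤ phi s := le_max_right _ _

lemma abs_le_phi (s : ℝ) : |s| - 1 ≤ phi s := le_max_left _ _

lemma phi_eq_zero {s : ℝ} (h : |s| ≤ 1) : phi s = 0 := max_eq_right (by linarith)

lemma abs_exc (s : ℝ) : |exc s| = phi s := by
  unfold exc clp phi
  rcases le_total s (-1) with h | h
  · rw [min_eq_right (by linarith), max_eq_left (by linarith),
      abs_of_nonpos (by linarith), abs_of_nonpos (by linarith),
      max_eq_left (by linarith)]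
    ring
  · rcases le_total s 1 with h2 | h2
    · have habs : |s| ≤ 1 := abs_le.mpr ⟨h, h2⟩
      rw [min_eq_right h2, max_eq_right h, sub_self, abs_zero,
        max_eq_right (by linarith)]
    · rw [min_eq_left h2, max_eq_right (by linarith),
        abs_of_nonneg (by linarith), abs_of_nonneg (by linarith),
        max_eq_left (by linarith)]

lemma abs_clp (s : ℝ) : |clp s| ≤ 1 := by
  unfold clp
  rw [abs_le]
  constructor
  · exact le_max_left _ _
  · exact max_le (by norm_num) (min_le_left _ _)

lemma abs_sub_exc (s : ℝ) : |s - exc s| ≤ 1 := by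
  have : s - exc s = clp s := by unfold exc; ring
  rw [this]; exact abs_clp s

lemma exc_mono_lip {s1 s2 : ℝ} (h : s1 ≤ s2) :
    exc s1 ≤ exc s2 ∧ exc s2 - exc s1 ≤ s2 - s1 := by
  unfold exc clp
  rw [max_def, max_def, min_def, min_def]
  split_ifs <;> constructor <;> linarith

lemma exc_diff (s1 s2 : ℝ) :
    0 ≤ (exc s2 - exc s1) * (s2 - s1) ∧ |exc s2 - exc s1| ≤ |s2 - s1| := by
  rcases le_total s1 s2 with h | h
  · obtain ⟨h1, h2⟩ := exc_mono_lip h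
    constructor
    · exact mul_nonneg (by linarith) (by linarith)
    · rw [abs_of_nonneg (by linarith), abs_of_nonneg (by linarith)]; exact h2
  · obtain ⟨h1, h2⟩ := exc_mono_lip h
    constructor
    · nlinarith
    · rw [abs_of_nonpos (by linarith), abs_of_nonpos (by linarith)]; linarith

lemma phi_conv {a b t : ℝ} (h0 : 0 ≤ t) (h1 : t ≤ 1) :
    phi ((1 - t) * a + t * b) ≤ (1 - t) * phi a + t * phi b := by
  have ha1 := abs_le_phi a
  have hb1 := abs_le_phi b
  have ha0 := phi_nonneg a
  have hb0 := phi_nonneg b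
  apply max_le
  · have habs : |(1 - t) * a + t * b| ≤ (1 - t) * |a| + t * |b| := by
      calc |(1 - t) * a + t * b| ≤ |(1 - t) * a| + |t * b| := abs_add_le _ _
        _ = (1 - t) * |a| + t * |b| := by
            rw [abs_mul, abs_mul, abs_of_nonneg (by linarith : (0:ℝ) ≤ 1 - t),
              abs_of_nonneg h0]
    nlinarith
  · nlinarith

lemma key (q u v Δ : ℝ) (hq0 : 0 ≤ q) (hq1 : q ≤ 1)
    (hs : 0 ≤ Δ * (v - u)) (hle : |Δ| ≤ |v - u|) :
    (1 - q) * phi (u + q * Δ) + q * phi (v - (1 - q) * Δ) ≤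
      (1 - q) * phi u + q * phi v := by
  rcases eq_or_ne v u with rfl | hne
  · have hΔ : Δ = 0 := by
      have : |Δ| ≤ 0 := by simpa using hle
      exact abs_eq_zero.mp (le_antisymm this (abs_nonneg _))
    simp [hΔ]
  · have hDne : v - u ≠ 0 := sub_ne_zero.mpr hne
    have hquot0 : 0 ≤ Δ / (v - u) := by
      have : Δ / (v - u) = Δ * (v - u) / (v - u) ^ 2 := by
        field_simp
      rw [this]
      exact div_nonneg hs (sq_nonneg _)
    have hquot1 : Δ / (v - u) ≤ 1 := by
      have h1 : |Δ / (v - u)| ≤ 1 := by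
        rw [abs_div]
        exact div_le_one_of_le₀ hle (abs_nonneg _)
      exact (abs_le.mp h1).2
    set α := q * (Δ / (v - u)) with hα
    set β := (1 - q) * (Δ / (v - u)) with hβ
    have hα0 : 0 ≤ α := mul_nonneg hq0 hquot0
    have hα1 : α ≤ 1 := by nlinarith
    have hβ0 : 0 ≤ β := mul_nonneg (by linarith) hquot0
    have hβ1 : β ≤ 1 := by nlinarith
    have hαD : α * (v - u) = q * Δ := by
      rw [hα]; field_simp
    have hβD : β * (v - u) = (1 - q) * Δ := by
      rw [hβ]; field_simp
    have e1 : u + q * Δ = (1 - α) * u + α * v := by linear_combination -hαD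
    have e2 : v - (1 - q) * Δ = (1 - β) * v + β * u := by linear_combination hβD
    have c1 : phi ((1 - α) * u + α * v) ≤ (1 - α) * phi u + α * phi v :=
      phi_conv hα0 hα1
    have c2 : phi ((1 - β) * v + β * u) ≤ (1 - β) * phi v + β * phi u :=
      phi_conv hβ0 hβ1
    have idq : (1 - q) * α = q * β := by rw [hα, hβ]; ring
    calc (1 - q) * phi (u + q * Δ) + q * phi (v - (1 - q) * Δ)
        = (1 - q) * phi ((1 - α) * u + α * v) + q * phi ((1 - β) * v + β * u) := by
          rw [e1, e2]
      _ ≤ (1 - q) * ((1 - α) * phi u + α * phi v) + q * ((1 - β) * phi v + β * phi u) := by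
          gcongr <;> linarith
      _ = (1 - q) * phi u + q * phi v := by linear_combination (phi v - phi u) * idq

lemma key_mem (q u v Δ : ℝ) (hq0 : 0 ≤ q) (hq1 : q ≤ 1)
    (hs : 0 ≤ Δ * (v - u)) (hle : |Δ| ≤ |v - u|) :
    |u + q * Δ| ≤ max |u| |v| ∧ |v - (1 - q) * Δ| ≤ max |u| |v| := by
  rcases le_total u v with huv | huv
  · have hΔ0 : 0 ≤ Δ := by
      rcases eq_or_lt_of_le huv with rfl | hlt
      · have : |Δ| ≤ 0 := by simpa using hle
        have := abs_eq_zero.mp (le_antisymm this (abs_nonneg _))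
        simp [this]
      · nlinarith
    have hΔle : Δ ≤ v - u := by
      have h2 := (abs_le.mp hle).2
      rw [abs_of_nonneg (by linarith : (0:ℝ) ≤ v - u)] at h2
      linarith [le_abs_self Δ]
    constructor
    · exact abs_le_max_abs_abs (by nlinarith) (by nlinarith)
    · exact abs_le_max_abs_abs (by nlinarith) (by nlinarith)
  · have hΔ0 : Δ ≤ 0 := by
      rcases eq_or_lt_of_le huv with rfl | hlt
      · have : |Δ| ≤ 0 := by simpa using hle
        have := abs_eq_zero.mp (le_antisymm this (abs_nonneg _))
        simp [this]
      · nlinarith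
    have hΔle : v - u ≤ Δ := by
      have := (abs_le.mp hle).1
      rw [abs_of_nonpos (by linarith : v - u ≤ 0)] at this
      linarith [neg_abs_le Δ]
    rw [max_comm]
    constructor
    · exact abs_le_max_abs_abs (by nlinarith) (by nlinarith)
    · exact abs_le_max_abs_abs (by nlinarith) (by nlinarith)

variable {d : ℕ}

/-- gap of the dimension-`j` edge through `x` -/
noncomputable def gapf (j : Fin d) (h : (Fin d → Bool) → ℝ) (x : Fin d → Bool) : ℝ :=
  h (Function.update x j true) - h (Function.update x j false)

/-- the weighted one-shot averaging repair operator in dimension `i` -/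
noncomputable def Rstage (p : Fin d → ℝ) (i : Fin d) (h : (Fin d → Bool) → ℝ)
    (x : Fin d → Bool) : ℝ :=
  if x i = true then h x - (1 - p i) * exc (gapf i h x)
  else h x + p i * exc (gapf i h x)

/-- reduced product weight (without coordinate `i`) -/
def nu (p : Fin d → ℝ) (i : Fin d) (x : Fin d → Bool) : ℝ :=
  ∏ k ∈ Finset.univ.erase i, (if x k then p k else 1 - p k)

/-- the weighted violation score of dimension `j` -/
noncomputable def Vsc (p : Fin d → ℝ) (j : Fin d) (h : (Fin d → Bool) → ℝ) : ℝ :=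
  ∑ x : Fin d → Bool, vmass p x * phi (gapf j h x)

lemma upd_false_eq {x : Fin d → Bool} {i : Fin d} (hxi : x i = false) :
    Function.update x i false = x := by
  rw [← hxi]; exact Function.update_eq_self i x

lemma upd_true_eq {x : Fin d → Bool} {i : Fin d} (hxi : x i = true) :
    Function.update x i true = x := by
  rw [← hxi]; exact Function.update_eq_self i x

lemma gapf_update_i (i : Fin d) (h : (Fin d → Bool) → ℝ) (z : Fin d → Bool) (c : Bool) :
    gapf i h (Function.update z i c) = gapf i h z := by
  unfold gapf
  rw [Function.update_idem, Function.update_idem]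

lemma nu_nonneg {p : Fin d → ℝ} (hp : ∀ k, 0 ≤ p k ∧ p k ≤ 1) (i : Fin d)
    (x : Fin d → Bool) : 0 ≤ nu p i x := by
  apply Finset.prod_nonneg
  intro k _
  rcases hp k with ⟨h1, h2⟩
  split <;> linarith

lemma nu_update (p : Fin d → ℝ) (i : Fin d) (x : Fin d → Bool) (b : Bool) :
    nu p i (Function.update x i b) = nu p i x := by
  unfold nu
  apply Finset.prod_congr rfl
  intro k hk
  rw [Function.update_of_ne (Finset.ne_of_mem_erase hk)]

lemma vmass_split (p : Fin d → ℝ) (i : Fin d) (x : Fin d → Bool) :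
    vmass p x = (if x i then p i else 1 - p i) * nu p i x := by
  unfold vmass nu
  rw [← Finset.mul_prod_erase _ _ (Finset.mem_univ i)]

lemma vmass_nonneg {p : Fin d → ℝ} (hp : ∀ k, 0 ≤ p k ∧ p k ≤ 1)
    (x : Fin d → Bool) : 0 ≤ vmass p x := by
  apply Finset.prod_nonneg
  intro k _
  rcases hp k with ⟨h1, h2⟩
  split <;> linarith

/-- pairing a sum over the cube along dimension `i` -/
lemma sum_pair (i : Fin d) (G : (Fin d → Bool) → ℝ) :
    ∑ x : Fin d → Bool, G x
      = ∑ x ∈ Finset.univ.filter (fun x => x i = false),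
          (G x + G (Function.update x i true)) := by
  rw [Finset.sum_add_distrib]
  have h1 : ∑ x ∈ Finset.univ.filter (fun x => x i = false), G (Function.update x i true)
      = ∑ x ∈ Finset.univ.filter (fun x => x i = true), G x := by
    apply Finset.sum_nbij' (fun x => Function.update x i true)
      (fun x => Function.update x i false)
    · intro a ha
      simp only [Finset.mem_filter, Finset.mem_univ, true_and] at ha ⊢
      exact Function.update_self i true a
    · intro a ha
      simp only [Finset.mem_filter, Finset.mem_univ, true_and] at ha ⊢
      exact Function.update_self i false a
    · intro a ha
      simp only [Finset.mem_filter, Finset.mem_univ, true_and] at ha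
      rw [Function.update_idem]
      exact upd_false_eq ha
    · intro a ha
      simp only [Finset.mem_filter, Finset.mem_univ, true_and] at ha
      rw [Function.update_idem]
      exact upd_true_eq ha
    · intro a ha
      rfl
  rw [h1]
  rw [← Finset.sum_filter_add_sum_filter_not Finset.univ (fun x => x i = false) G]
  congr 1
  apply Finset.sum_congr _ (fun _ _ => rfl)
  apply Finset.filter_congr
  intro x _
  simp [Bool.not_eq_false]

lemma gap_R_self (p : Fin d → ℝ) (i : Fin d) (h : (Fin d → Bool) → ℝ)
    (x : Fin d → Bool) :
    gapf i (Rstage p i h) x = gapf i h x - exc (gapf i h x) := by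
  have e1 : (Function.update x i true) i = true := Function.update_self i true x
  have e2 : (Function.update x i false) i = false := Function.update_self i false x
  unfold gapf Rstage
  rw [e1, e2]
  simp only [if_true, Bool.false_eq_true, if_false]
  rw [gapf_update_i, gapf_update_i]
  unfold gapf
  ring

lemma abs_gap_R_self (p : Fin d → ℝ) (i : Fin d) (h : (Fin d → Bool) → ℝ)
    (x : Fin d → Bool) : |gapf i (Rstage p i h) x| ≤ 1 := by
  rw [gap_R_self]; exact abs_sub_exc _

lemma Rstage_sub (p : Fin d → ℝ) (i : Fin d) (h : (Fin d → Bool) → ℝ)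
    (x : Fin d → Bool) :
    Rstage p i h x - h x
      = (if x i = true then -(1 - p i) else p i) * exc (gapf i h x) := by
  unfold Rstage
  split_ifs <;> ring

lemma gap_R_false {p : Fin d → ℝ} {i j : Fin d} (hij : j ≠ i)
    (h : (Fin d → Bool) → ℝ) {x : Fin d → Bool} (hxi : x i = false) :
    gapf j (Rstage p i h) x = gapf j h x
      + p i * (exc (gapf i h (Function.update x j true))
          - exc (gapf i h (Function.update x j false))) := by
  have e1 : (Function.update x j true) i = x i := Function.update_of_ne hij.symm _ _
  have e2 : (Function.update x j false) i = x i := Function.update_of_ne hij.symm _ _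
  unfold gapf
  show Rstage p i h (Function.update x j true) - Rstage p i h (Function.update x j false) = _
  unfold Rstage
  rw [e1, e2, hxi]
  simp only [Bool.false_eq_true, if_false]
  unfold gapf
  ring

lemma gap_R_true {p : Fin d → ℝ} {i j : Fin d} (hij : j ≠ i)
    (h : (Fin d → Bool) → ℝ) {x : Fin d → Bool} (hxi : x i = true) :
    gapf j (Rstage p i h) x = gapf j h x
      - (1 - p i) * (exc (gapf i h (Function.update x j true))
          - exc (gapf i h (Function.update x j false))) := by
  have e1 : (Function.update x j true) i = x i := Function.update_of_ne hij.symm _ _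
  have e2 : (Function.update x j false) i = x i := Function.update_of_ne hij.symm _ _
  unfold gapf
  show Rstage p i h (Function.update x j true) - Rstage p i h (Function.update x j false) = _
  unfold Rstage
  rw [e1, e2, hxi]
  simp only [if_true]
  unfold gapf
  ring

lemma upd_comm' {i j : Fin d} (hij : i ≠ j) (x : Fin d → Bool) (c b : Bool) :
    Function.update (Function.update x i c) j b
      = Function.update (Function.update x j b) i c :=
  Function.update_comm hij c b x

lemma gap_partner {i j : Fin d} (hij : j ≠ i) (h : (Fin d → Bool) → ℝ)
    (x : Fin d → Bool) :
    gapf j h (Function.update x i true) - gapf j h (Function.update x i false)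
      = gapf i h (Function.update x j true) - gapf i h (Function.update x j false) := by
  unfold gapf
  rw [upd_comm' hij.symm x true true, upd_comm' hij.symm x true false,
    upd_comm' hij.symm x false true, upd_comm' hij.symm x false false]
  ring

lemma gapf_update_i' {i j : Fin d} (hij : j ≠ i) (h : (Fin d → Bool) → ℝ)
    (x : Fin d → Bool) (b c : Bool) :
    gapf i h (Function.update (Function.update x i c) j b)
      = gapf i h (Function.update x j b) := by
  rw [upd_comm' hij.symm x c b, gapf_update_i]

/-- the repair in dimension `i` does not increase the violation score in dimension `j ≠ i` -/
lemma VscR_le {p : Fin d → ℝ} (hp : ∀ k, 0 ≤ p k ∧ p k ≤ 1) {i j : Fin d}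
    (hij : j ≠ i) (h : (Fin d → Bool) → ℝ) :
    Vsc p j (Rstage p i h) ≤ Vsc p j h := by
  unfold Vsc
  rw [sum_pair i (fun x => vmass p x * phi (gapf j (Rstage p i h) x)),
    sum_pair i (fun x => vmass p x * phi (gapf j h x))]
  apply Finset.sum_le_sum
  intro x hx
  rw [Finset.mem_filter] at hx
  have hxi : x i = false := hx.2
  have hx1i : (Function.update x i true) i = true := Function.update_self i true x
  set q := p i with hq
  set ν := nu p i x with hν
  set s1 := gapf i h (Function.update x j false) with hs1
  set s2 := gapf i h (Function.update x j true) with hs2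
  set Δ := exc s2 - exc s1 with hΔ
  set u := gapf j h x with hu
  set v := gapf j h (Function.update x i true) with hv
  have key1 : gapf j (Rstage p i h) x = u + q * Δ := by
    rw [gap_R_false hij h hxi]
  have key2 : gapf j (Rstage p i h) (Function.update x i true) = v - (1 - q) * Δ := by
    rw [gap_R_true hij h hx1i, gapf_update_i' hij, gapf_update_i' hij]
  have hvu : v - u = s2 - s1 := by
    have hgp := gap_partner hij h x
    rw [upd_false_eq hxi] at hgp
    exact hgp
  have hΔ1 : 0 ≤ Δ * (v - u) := by rw [hvu]; exact (exc_diff s1 s2).1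
  have hΔ2 : |Δ| ≤ |v - u| := by rw [hvu]; exact (exc_diff s1 s2).2
  have hkey := key q u v Δ (hp i).1 (hp i).2 hΔ1 hΔ2
  have hμx : vmass p x = (1 - q) * ν := by
    rw [vmass_split p i x, hxi]; simp; rfl
  have hμx1 : vmass p (Function.update x i true) = q * ν := by
    rw [vmass_split p i (Function.update x i true), hx1i, nu_update]
    simp; rfl
  have hν0 : 0 ≤ ν := nu_nonneg hp i x
  rw [key1, key2, hμx, hμx1]
  calc (1 - q) * ν * phi (u + q * Δ) + q * ν * phi (v - (1 - q) * Δ)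
      = ν * ((1 - q) * phi (u + q * Δ) + q * phi (v - (1 - q) * Δ)) := by ring
    _ ≤ ν * ((1 - q) * phi u + q * phi v) := mul_le_mul_of_nonneg_left hkey hν0
    _ = (1 - q) * ν * phi u + q * ν * phi v := by ring

/-- the repair in dimension `i` preserves edge-Lipschitzness in dimension `j ≠ i` -/
lemma lip_preserve {p : Fin d → ℝ} (hp : ∀ k, 0 ≤ p k ∧ p k ≤ 1) {i j : Fin d}
    (hij : j ≠ i) (h : (Fin d → Bool) → ℝ)
    (hh : ∀ x, |gapf j h x| ≤ 1) (x : Fin d → Bool) :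
    |gapf j (Rstage p i h) x| ≤ 1 := by
  set q := p i with hq
  set s1 := gapf i h (Function.update x j false) with hs1
  set s2 := gapf i h (Function.update x j true) with hs2
  set Δ := exc s2 - exc s1 with hΔ
  set u := gapf j h (Function.update x i false) with hu
  set v := gapf j h (Function.update x i true) with hv
  have hvu : v - u = s2 - s1 := gap_partner hij h x
  have hΔ1 : 0 ≤ Δ * (v - u) := by rw [hvu]; exact (exc_diff s1 s2).1
  have hΔ2 : |Δ| ≤ |v - u| := by rw [hvu]; exact (exc_diff s1 s2).2
  have hmem := key_mem q u v Δ (hp i).1 (hp i).2 hΔ1 hΔ2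
  have hmax : max |u| |v| ≤ 1 := max_le (hh _) (hh _)
  rcases Bool.eq_false_or_eq_true (x i) with hxi | hxi
  · have key1 : gapf j (Rstage p i h) x = v - (1 - q) * Δ := by
      rw [gap_R_true hij h hxi, hv, upd_true_eq hxi]
    rw [key1]
    exact le_trans hmem.2 hmax
  · have key1 : gapf j (Rstage p i h) x = u + q * Δ := by
      rw [gap_R_false hij h hxi, hu, upd_false_eq hxi]
    rw [key1]
    exact le_trans hmem.1 hmax

/-- weighted L¹ movement of one repair stage is at most half the violation score -/
lemma stage_cost {p : Fin d → ℝ} (hp : ∀ k, 0 ≤ p k ∧ p k ≤ 1) (i : Fin d)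
    (h : (Fin d → Bool) → ℝ) :
    ∑ x : Fin d → Bool, vmass p x * |Rstage p i h x - h x| ≤ Vsc p i h / 2 := by
  have hpt : ∀ x : Fin d → Bool, vmass p x * |Rstage p i h x - h x|
      = vmass p x * ((if x i = true then 1 - p i else p i) * phi (gapf i h x)) := by
    intro x
    rw [Rstage_sub, abs_mul, abs_exc]
    congr 2
    split_ifs with hxi
    · rw [abs_of_nonpos (by linarith [(hp i).2])]; ring
    · rw [abs_of_nonneg (hp i).1]
  rw [Finset.sum_congr rfl (fun x _ => hpt x)]
  unfold Vsc
  rw [sum_pair i (fun x => vmass p x * ((if x i = true then 1 - p i else p i) * phi (gapf i h x))),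
    sum_pair i (fun x => vmass p x * phi (gapf i h x)), Finset.sum_div]
  apply Finset.sum_le_sum
  intro x hx
  rw [Finset.mem_filter] at hx
  have hxi : x i = false := hx.2
  have hx1i : (Function.update x i true) i = true := Function.update_self i true x
  have hgap : gapf i h (Function.update x i true) = gapf i h x := gapf_update_i i h x true
  have hμx : vmass p x = (1 - p i) * nu p i x := by
    rw [vmass_split p i x, hxi]; simp
  have hμx1 : vmass p (Function.update x i true) = p i * nu p i x := by
    rw [vmass_split p i (Function.update x i true), hx1i, nu_update]; simp
  rw [hxi, hx1i, hgap, hμx, hμx1]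
  simp only [Bool.false_eq_true, if_false, if_true]
  have hν0 : 0 ≤ nu p i x := nu_nonneg hp i x
  have hφ0 : 0 ≤ phi (gapf i h x) := phi_nonneg _
  have hq := hp i
  nlinarith [mul_nonneg hν0 hφ0, sq_nonneg (2 * p i - 1),
    mul_nonneg (mul_nonneg hν0 hφ0) (sq_nonneg (2 * p i - 1))]

/-- iterated repair, one dimension at a time -/
noncomputable def iter (p : Fin d → ℝ) (f : (Fin d → Bool) → ℝ) : ℕ → ((Fin d → Bool) → ℝ)
  | 0 => f
  | n + 1 => if hn : n < d then Rstage p ⟨n, hn⟩ (iter p f n) else iter p f n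

lemma Vsc_iter_le {p : Fin d → ℝ} (hp : ∀ k, 0 ≤ p k ∧ p k ≤ 1)
    (f : (Fin d → Bool) → ℝ) (i : Fin d) :
    ∀ m, m ≤ i.val → Vsc p i (iter p f m) ≤ Vsc p i f := by
  intro m
  induction m with
  | zero => intro _; exact le_refl _
  | succ n ih =>
    intro hm
    have hn : n < d := lt_of_lt_of_le (Nat.lt_of_lt_of_le (Nat.lt_succ_self n) hm) i.isLt.le
    have hne : i ≠ ⟨n, hn⟩ := by
      intro hcon
      have : i.val = n := by rw [hcon]
      omega
    rw [iter, dif_pos hn]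
    exact le_trans (VscR_le hp hne (iter p f n)) (ih (by omega))

lemma iter_lip {p : Fin d → ℝ} (hp : ∀ k, 0 ≤ p k ∧ p k ≤ 1)
    (f : (Fin d → Bool) → ℝ) :
    ∀ m, m ≤ d → ∀ j : Fin d, j.val < m → ∀ x, |gapf j (iter p f m) x| ≤ 1 := by
  intro m
  induction m with
  | zero => intro _ j hj; omega
  | succ n ih =>
    intro hm j hj x
    have hn : n < d := by omega
    rw [iter, dif_pos hn]
    rcases Nat.lt_or_ge j.val n with hlt | hge
    · refine lip_preserve hp ?_ (iter p f n) (ih (by omega) j hlt) x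
      intro hcon
      rw [hcon] at hlt
      simp at hlt
    · have : j = ⟨n, hn⟩ := by
        apply Fin.ext
        simp only []
        omega
      rw [this]
      exact abs_gap_R_self p ⟨n, hn⟩ (iter p f n) x

lemma tele (F : ℕ → ℝ) (n : ℕ) :
    |F n - F 0| ≤ ∑ k ∈ Finset.range n, |F (k + 1) - F k| := by
  induction n with
  | zero => simp
  | succ m ih =>
    rw [Finset.sum_range_succ]
    calc |F (m + 1) - F 0| ≤ |F (m + 1) - F m| + |F m - F 0| := abs_sub_le _ _ _
      _ ≤ |F (m + 1) - F m| + ∑ k ∈ Finset.range m, |F (k + 1) - F k| := by linarith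
      _ = _ := by ring

/-- total weighted movement of the full repair -/
lemma movement {p : Fin d → ℝ} (hp : ∀ k, 0 ≤ p k ∧ p k ≤ 1)
    (f : (Fin d → Bool) → ℝ) :
    ∑ x : Fin d → Bool, vmass p x * |iter p f d x - f x|
      ≤ (∑ i : Fin d, Vsc p i f) / 2 := by
  have step1 : ∑ x : Fin d → Bool, vmass p x * |iter p f d x - f x|
      ≤ ∑ k ∈ Finset.range d, ∑ x : Fin d → Bool,
          vmass p x * |iter p f (k + 1) x - iter p f k x| := by
    rw [Finset.sum_comm]
    apply Finset.sum_le_sum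
    intro x _
    rw [← Finset.mul_sum]
    apply mul_le_mul_of_nonneg_left _ (vmass_nonneg hp x)
    exact tele (fun k => iter p f k x) d
  have step2 : ∀ (k : ℕ) (hkd : k < d), ∑ x : Fin d → Bool,
      vmass p x * |iter p f (k + 1) x - iter p f k x|
      ≤ Vsc p ⟨k, hkd⟩ f / 2 := by
    intro k hkd
    have : iter p f (k + 1) = Rstage p ⟨k, hkd⟩ (iter p f k) := by
      rw [iter, dif_pos hkd]
    rw [this]
    calc ∑ x : Fin d → Bool, vmass p x * |Rstage p ⟨k, hkd⟩ (iter p f k) x - iter p f k x|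
        ≤ Vsc p ⟨k, hkd⟩ (iter p f k) / 2 := stage_cost hp _ _
      _ ≤ Vsc p ⟨k, hkd⟩ f / 2 := by
          have := Vsc_iter_le hp f ⟨k, hkd⟩ k (le_refl k)
          linarith
  calc ∑ x : Fin d → Bool, vmass p x * |iter p f d x - f x|
      ≤ ∑ k ∈ Finset.range d, ∑ x : Fin d → Bool,
          vmass p x * |iter p f (k + 1) x - iter p f k x| := step1
    _ ≤ ∑ k ∈ Finset.range d, (if hk : k < d then Vsc p ⟨k, hk⟩ f / 2 else 0) := by
        apply Finset.sum_le_sum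
        intro k hk
        have hkd : k < d := by simpa using hk
        rw [dif_pos hkd]
        exact step2 k hkd
    _ = ∑ i : Fin d, Vsc p i f / 2 := by
        rw [← Fin.sum_univ_eq_sum_range (fun k => if hk : k < d then Vsc p ⟨k, hk⟩ f / 2 else 0) d]
        apply Finset.sum_congr rfl
        intro i _
        rw [dif_pos i.isLt]
    _ = (∑ i : Fin d, Vsc p i f) / 2 := by rw [Finset.sum_div]

/-- hamming distance decreases when one disagreeing coordinate is fixed -/
lemma hamming_dec {x y : Fin d → Bool} {i : Fin d} (hi : x i ≠ y i) {n : ℕ}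
    (h : hammingDist x y = n + 1) :
    hammingDist (Function.update x i (y i)) y = n := by
  have hfil : Finset.univ.filter (fun k => Function.update x i (y i) k ≠ y k)
      = (Finset.univ.filter (fun k => x k ≠ y k)).erase i := by
    ext k
    simp only [Finset.mem_filter, Finset.mem_erase, Finset.mem_univ, true_and]
    rcases eq_or_ne k i with rfl | hki
    · simp [Function.update_self]
    · simp [Function.update_of_ne hki, hki]
  have hmem : i ∈ Finset.univ.filter (fun k => x k ≠ y k) := by
    simp [hi]
  unfold hammingDist at h ⊢
  rw [hfil, Finset.card_erase_of_mem hmem, h]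
  simp

/-- per-dimension edge-Lipschitz implies globally Lipschitz -/
lemma lip_of_edges {g : (Fin d → Bool) → ℝ}
    (hg : ∀ (i : Fin d) (x : Fin d → Bool),
      |g (Function.update x i true) - g (Function.update x i false)| ≤ 1) :
    ∀ x y : Fin d → Bool, |g x - g y| ≤ (hammingDist x y : ℝ) := by
  suffices H : ∀ (n : ℕ) (x y : Fin d → Bool), hammingDist x y = n → |g x - g y| ≤ (n : ℝ) by
    intro x y
    exact H (hammingDist x y) x y rfl
  intro n
  induction n with
  | zero =>
    intro x y h
    rw [hammingDist_eq_zero.mp h]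
    simp
  | succ n ih =>
    intro x y h
    have hxy : x ≠ y := by
      intro hcon
      rw [hcon, hammingDist_self] at h
      omega
    obtain ⟨i, hi⟩ : ∃ i, x i ≠ y i := by
      by_contra hc
      push_neg at hc
      exact hxy (funext hc)
    have hd' := hamming_dec hi h
    have hstep : |g x - g (Function.update x i (y i))| ≤ 1 := by
      rcases Bool.eq_false_or_eq_true (x i) with hxi | hxi
      · have hyi : y i = false := by
          rcases Bool.eq_false_or_eq_true (y i) with h1 | h1
          · exact absurd (hxi.trans h1.symm) hi
          · exact h1
        rw [hyi]
        have : x = Function.update x i true := (upd_true_eq hxi).symm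
        rw [this, Function.update_idem]
        exact hg i x
      · have hyi : y i = true := by
          rcases Bool.eq_false_or_eq_true (y i) with h1 | h1
          · exact h1
          · exact absurd (hxi.trans h1.symm) hi
        rw [hyi]
        have : x = Function.update x i false := (upd_false_eq hxi).symm
        rw [this, Function.update_idem, abs_sub_comm]
        exact hg i x
    calc |g x - g y| ≤ |g x - g (Function.update x i (y i))|
          + |g (Function.update x i (y i)) - g y| := abs_sub_le _ _ _
      _ ≤ 1 + (n : ℝ) := add_le_add hstep (ih _ y hd')
      _ = ((n + 1 : ℕ) : ℝ) := by push_cast; ring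


lemma abs_sub_le_ImD (f : (Fin d → Bool) → ℝ) (a b : Fin d → Bool) :
    |f a - f b| ≤ ImD f := by
  unfold ImD
  rw [abs_le]
  constructor
  · linarith [Finset.le_sup' f (Finset.mem_univ b), Finset.inf'_le f (Finset.mem_univ a)]
  · linarith [Finset.le_sup' f (Finset.mem_univ a), Finset.inf'_le f (Finset.mem_univ b)]

lemma Vsc_le_ImD {p : Fin d → ℝ} (hp : ∀ k, 0 ≤ p k ∧ p k ≤ 1)
    (f : (Fin d → Bool) → ℝ) (hI : 0 ≤ ImD f) (i : Fin d) :
    Vsc p i f ≤ ImD f * ∑ x ∈ Finset.univ.filter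
        (fun x : Fin d → Bool => x i = false ∧
          1 < |f x - f (Function.update x i true)|),
      (vmass p x + vmass p (Function.update x i true)) := by
  unfold Vsc
  rw [sum_pair i (fun x => vmass p x * phi (gapf i f x))]
  have hfil : Finset.univ.filter (fun x : Fin d → Bool => x i = false ∧
        1 < |f x - f (Function.update x i true)|)
      = (Finset.univ.filter (fun x : Fin d → Bool => x i = false)).filter
          (fun x => 1 < |f x - f (Function.update x i true)|) := by
    rw [Finset.filter_filter]
  have hR : ∑ x ∈ Finset.univ.filter (fun x : Fin d → Bool => x i = false ∧
        1 < |f x - f (Function.update x i true)|),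
      (vmass p x + vmass p (Function.update x i true))
      = ∑ x ∈ Finset.univ.filter (fun x : Fin d → Bool => x i = false),
          (if 1 < |f x - f (Function.update x i true)| then
            (vmass p x + vmass p (Function.update x i true)) else 0) := by
    rw [hfil, Finset.sum_filter]
  rw [hR, Finset.mul_sum]
  apply Finset.sum_le_sum
  intro x hx
  rw [Finset.mem_filter] at hx
  have hxi : x i = false := hx.2
  have hgx : gapf i f x = f (Function.update x i true) - f x := by
    unfold gapf; rw [upd_false_eq hxi]
  have hgx1 : gapf i f (Function.update x i true) = gapf i f x := gapf_update_i i f x true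
  rw [hgx1, hgx]
  by_cases hviol : 1 < |f x - f (Function.update x i true)|
  · rw [if_pos hviol]
    have h1 : phi (f (Function.update x i true) - f x) ≤ ImD f := by
      apply max_le _ hI
      have := abs_sub_le_ImD f (Function.update x i true) x
      linarith
    have h2 : 0 ≤ vmass p x + vmass p (Function.update x i true) :=
      add_nonneg (vmass_nonneg hp _) (vmass_nonneg hp _)
    calc vmass p x * phi (f (Function.update x i true) - f x)
          + vmass p (Function.update x i true) * phi (f (Function.update x i true) - f x)
        = (vmass p x + vmass p (Function.update x i true))
            * phi (f (Function.update x i true) - f x) := by ring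
      _ ≤ (vmass p x + vmass p (Function.update x i true)) * ImD f :=
          mul_le_mul_of_nonneg_left h1 h2
      _ = ImD f * (vmass p x + vmass p (Function.update x i true)) := by ring
  · rw [if_neg hviol, mul_zero]
    have habs : |f (Function.update x i true) - f x| ≤ 1 := by
      rw [abs_sub_comm]; exact le_of_not_gt hviol
    rw [phi_eq_zero habs]
    simp

/-- McShane-type Lipschitz extension from a nonempty finite set -/
noncomputable def mcs (T : Finset (Fin d → Bool)) (hT : T.Nonempty)
    (f : (Fin d → Bool) → ℝ) : (Fin d → Bool) → ℝ :=
  fun x => T.inf' hT (fun y => f y + (hammingDist x y : ℝ))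

lemma mcs_lip (T : Finset (Fin d → Bool)) (hT : T.Nonempty) (f : (Fin d → Bool) → ℝ)
    (x x' : Fin d → Bool) :
    |mcs T hT f x - mcs T hT f x'| ≤ (hammingDist x x' : ℝ) := by
  have key : ∀ a b : Fin d → Bool,
      mcs T hT f a ≤ mcs T hT f b + (hammingDist a b : ℝ) := by
    intro a b
    obtain ⟨y, hyT, hy⟩ := Finset.exists_mem_eq_inf' hT (fun y => f y + (hammingDist b y : ℝ))
    have h1 : mcs T hT f a ≤ f y + (hammingDist a y : ℝ) :=
      Finset.inf'_le _ hyT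
    have h2 : (hammingDist a y : ℝ) ≤ (hammingDist a b : ℝ) + (hammingDist b y : ℝ) := by
      exact_mod_cast hammingDist_triangle a b y
    have h3 : mcs T hT f b = f y + (hammingDist b y : ℝ) := hy
    rw [h3]
    linarith
  rw [abs_sub_le_iff]
  constructor
  · linarith [key x x']
  · have := key x' x
    rw [hammingDist_comm x' x] at this
    linarith

lemma mcs_eq (T : Finset (Fin d → Bool)) (hT : T.Nonempty) (f : (Fin d → Bool) → ℝ)
    (hpart : ∀ y ∈ T, ∀ z ∈ T, |f y - f z| ≤ (hammingDist y z : ℝ))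
    {x : Fin d → Bool} (hx : x ∈ T) : mcs T hT f x = f x := by
  apply le_antisymm
  · have h0 := Finset.inf'_le (fun y => f y + (hammingDist x y : ℝ)) hx
    rw [hammingDist_self] at h0
    simp only [Nat.cast_zero, add_zero] at h0
    exact h0
  · apply Finset.le_inf'
    intro y hy
    have h1 := hpart x hx y hy
    linarith [le_abs_self (f x - f y), neg_abs_le (f x - f y)]

/-- integrality: `δℤ`-valued quantities closer than `m + δ` are within `m` -/
lemma quant_le {δ : ℝ} (hδ0 : 0 < δ) {a b : ℝ}
    (ha : ∃ n : ℤ, a = n * δ) (hb : ∃ n : ℤ, b = n * δ)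
    (hδint : ∃ n : ℤ, (n : ℝ) * δ = 1) {m : ℕ}
    (h : |a - b| < (m : ℝ) + δ) : |a - b| ≤ (m : ℝ) := by
  obtain ⟨na, rfl⟩ := ha
  obtain ⟨nb, rfl⟩ := hb
  obtain ⟨N, hN⟩ := hδint
  have hN0 : 0 < (N : ℝ) := by nlinarith
  have hNz : 0 < N := by exact_mod_cast hN0
  have e : (na : ℝ) * δ - (nb : ℝ) * δ = ((na - nb : ℤ) : ℝ) * δ := by
    push_cast; ring
  rw [e] at h ⊢
  rw [abs_mul, abs_of_pos hδ0] at h ⊢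
  have hm : (m : ℝ) = ((m * N : ℤ) : ℝ) * δ := by
    push_cast
    calc (m : ℝ) = (m : ℝ) * ((N : ℝ) * δ) := by rw [hN]; ring
      _ = (m : ℝ) * (N : ℝ) * δ := by ring
  rw [hm] at h ⊢
  have hlt : |((na - nb : ℤ) : ℝ)| < ((m * N : ℤ) : ℝ) + 1 := by
    nlinarith
  have hltZ : |na - nb| < m * N + 1 := by
    exact_mod_cast hlt
  have hleZ : |na - nb| ≤ m * N := by omega
  have hleR : |((na - nb : ℤ) : ℝ)| ≤ ((m * N : ℤ) : ℝ) := by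
    exact_mod_cast hleZ
  nlinarith

end VEMLB

open VEMLB

/-- Main structural lemma: if a `δℤ`-valued `f : {0,1}^d → ℝ` is `ε`-far from
Lipschitz with respect to the product Bernoulli distribution `Π`, then the total
edge mass `Σ_{violated edges {x,y}} (p_x+p_y)/d` is at least
`δ(ε − d²δ)/(d · ImD(f))`. -/
theorem violated_edge_mass_lower_bound {d : ℕ} (hd : 0 < d) (δ ε : ℝ)
    (hδ : 0 < δ ∧ δ ≤ 1) (hδint : ∃ n : ℤ, (n : ℝ) * δ = 1)
    (p : Fin d → ℝ) (hp : ∀ i, 0 ≤ p i ∧ p i ≤ 1)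
    (f : (Fin d → Bool) → ℝ) (hf : ∀ x, ∃ n : ℤ, f x = n * δ)
    (hImD : 0 < ImD f)
    (hfar : ∀ g : (Fin d → Bool) → ℝ,
      (∀ x y : Fin d → Bool, |g x - g y| ≤ (hammingDist x y : ℝ)) →
      ε ≤ ∑ x ∈ Finset.univ.filter (fun x => f x ≠ g x), vmass p x) :
    δ * (ε - (d : ℝ) ^ 2 * δ) / ((d : ℝ) * ImD f) ≤
      ∑ i : Fin d, ∑ x ∈ Finset.univ.filter
          (fun x : Fin d → Bool => x i = false ∧
            1 < |f x - f (Function.update x i true)|),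
        (vmass p x + vmass p (Function.update x i true)) / d := by
  classical
  set g := iter p f d with hgdef
  -- the repaired function is Lipschitz
  have hedge : ∀ (j : Fin d) (x : Fin d → Bool), |gapf j g x| ≤ 1 :=
    fun j x => iter_lip hp f d le_rfl j j.isLt x
  have hglip : ∀ x y : Fin d → Bool, |g x - g y| ≤ (hammingDist x y : ℝ) :=
    lip_of_edges (fun i x => hedge i x)
  -- the set where g is δ/2-close to f
  set T : Finset (Fin d → Bool) :=
    Finset.univ.filter (fun x => |g x - f x| < δ / 2) with hTdef
  have hpart : ∀ y ∈ T, ∀ z ∈ T, |f y - f z| ≤ (hammingDist y z : ℝ) := by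
    intro y hy z hz
    rw [hTdef, Finset.mem_filter] at hy hz
    have h1 : |f y - f z| < (hammingDist y z : ℝ) + δ := by
      have e1 : |f y - g y| = |g y - f y| := abs_sub_comm _ _
      calc |f y - f z| ≤ |f y - g y| + |g y - f z| := abs_sub_le _ _ _
        _ ≤ |f y - g y| + (|g y - g z| + |g z - f z|) := by
            linarith [abs_sub_le (g y) (g z) (f z)]
        _ < δ / 2 + ((hammingDist y z : ℝ) + δ / 2) := by
            rw [e1]
            have := hglip y z
            linarith [hy.2, hz.2]
        _ = (hammingDist y z : ℝ) + δ := by ring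
    exact quant_le hδ.1 (hf y) (hf z) hδint h1
  -- a Lipschitz function agreeing with f on T
  obtain ⟨G, hGlip, hGeq⟩ : ∃ G : (Fin d → Bool) → ℝ,
      (∀ x y : Fin d → Bool, |G x - G y| ≤ (hammingDist x y : ℝ)) ∧
        ∀ x ∈ T, G x = f x := by
    by_cases hTne : T.Nonempty
    · exact ⟨mcs T hTne f, mcs_lip T hTne f, fun x hx => mcs_eq T hTne f hpart hx⟩
    · refine ⟨fun _ => 0, ?_, ?_⟩
      · intro x y
        simp
      · intro x hx
        rw [Finset.not_nonempty_iff_eq_empty] at hTne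
        rw [hTne] at hx
        exact absurd hx (Finset.notMem_empty x)
  have hε := hfar G hGlip
  -- disagreement with G is contained in the far-moved set
  have hsub : Finset.univ.filter (fun x => f x ≠ G x)
      ⊆ Finset.univ.filter (fun x => ¬(|g x - f x| < δ / 2)) := by
    intro x hx
    rw [Finset.mem_filter] at hx ⊢
    refine ⟨Finset.mem_univ x, ?_⟩
    intro hlt
    have hxT : x ∈ T := by
      rw [hTdef, Finset.mem_filter]
      exact ⟨Finset.mem_univ x, hlt⟩
    exact hx.2 (hGeq x hxT).symm
  have hchain1 : ε ≤ ∑ x ∈ Finset.univ.filter (fun x => ¬(|g x - f x| < δ / 2)),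
      vmass p x :=
    le_trans hε (Finset.sum_le_sum_of_subset_of_nonneg hsub
      (fun x _ _ => vmass_nonneg hp x))
  -- Markov
  have hchain2 : ∑ x ∈ Finset.univ.filter (fun x => ¬(|g x - f x| < δ / 2)), vmass p x
      ≤ (2 / δ) * ∑ x : Fin d → Bool, vmass p x * |g x - f x| := by
    rw [Finset.mul_sum]
    calc ∑ x ∈ Finset.univ.filter (fun x => ¬(|g x - f x| < δ / 2)), vmass p x
        ≤ ∑ x ∈ Finset.univ.filter (fun x => ¬(|g x - f x| < δ / 2)),
            (2 / δ) * (vmass p x * |g x - f x|) := by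
          apply Finset.sum_le_sum
          intro x hx
          rw [Finset.mem_filter] at hx
          have hfar' : δ / 2 ≤ |g x - f x| := le_of_not_gt hx.2
          have hμ := vmass_nonneg hp x
          have hδ0 := hδ.1
          rw [div_mul_eq_mul_div, le_div_iff₀ hδ0]
          nlinarith
      _ ≤ ∑ x : Fin d → Bool, (2 / δ) * (vmass p x * |g x - f x|) := by
          apply Finset.sum_le_sum_of_subset_of_nonneg (Finset.filter_subset _ _)
          intro x _ _
          have h1 := vmass_nonneg hp x
          have hδ0 := hδ.1
          positivity
  -- movement bound
  have hmv : ∑ x : Fin d → Bool, vmass p x * |g x - f x|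
      ≤ (∑ i : Fin d, Vsc p i f) / 2 := by
    have := movement hp f
    calc ∑ x : Fin d → Bool, vmass p x * |g x - f x|
        = ∑ x : Fin d → Bool, vmass p x * |iter p f d x - f x| := by rw [hgdef]
      _ ≤ (∑ i : Fin d, Vsc p i f) / 2 := movement hp f
  -- score bound
  set VM : Fin d → ℝ := fun i => ∑ x ∈ Finset.univ.filter
      (fun x : Fin d → Bool => x i = false ∧
        1 < |f x - f (Function.update x i true)|),
      (vmass p x + vmass p (Function.update x i true)) with hVM
  have hVsc : ∀ i : Fin d, Vsc p i f ≤ ImD f * VM i :=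
    fun i => Vsc_le_ImD hp f (le_of_lt hImD) i
  set M : ℝ := ∑ i : Fin d, VM i with hM
  have hM0 : 0 ≤ M := by
    apply Finset.sum_nonneg
    intro i _
    apply Finset.sum_nonneg
    intro x _
    exact add_nonneg (vmass_nonneg hp x) (vmass_nonneg hp _)
  have hVscM : ∑ i : Fin d, Vsc p i f ≤ ImD f * M := by
    rw [hM, Finset.mul_sum]
    exact Finset.sum_le_sum (fun i _ => hVsc i)
  -- combine: δ ε ≤ ImD f * M
  have hεM : δ * ε ≤ ImD f * M := by
    have hδ0 := hδ.1
    have h1 : ε ≤ (2 / δ) * ((ImD f * M) / 2) := by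
      calc ε ≤ (2 / δ) * ∑ x : Fin d → Bool, vmass p x * |g x - f x| :=
            le_trans hchain1 hchain2
        _ ≤ (2 / δ) * ((∑ i : Fin d, Vsc p i f) / 2) := by
            apply mul_le_mul_of_nonneg_left hmv
            positivity
        _ ≤ (2 / δ) * ((ImD f * M) / 2) := by
            apply mul_le_mul_of_nonneg_left _ (by positivity)
            linarith
    have h2 : (2 / δ) * ((ImD f * M) / 2) = (ImD f * M) / δ := by
      field_simp
    rw [h2] at h1
    rw [le_div_iff₀ hδ0] at h1
    linarith
  -- final arithmetic
  have hRHS : ∑ i : Fin d, ∑ x ∈ Finset.univ.filter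
      (fun x : Fin d → Bool => x i = false ∧
        1 < |f x - f (Function.update x i true)|),
      (vmass p x + vmass p (Function.update x i true)) / d = M / d := by
    rw [hM, Finset.sum_div]
    apply Finset.sum_congr rfl
    intro i _
    rw [hVM, ← Finset.sum_div]
  rw [hRHS]
  have hd0 : (0 : ℝ) < (d : ℝ) := by exact_mod_cast hd
  rw [div_le_div_iff₀ (by positivity) hd0]
  have hδ0 := hδ.1
  nlinarith [mul_le_mul_of_nonneg_left hεM (le_of_lt hd0),
    mul_pos (mul_pos hd0 hd0) (mul_pos hd0 (mul_pos hδ0 hδ0))]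
end

section
/- Repair operator accounting (Lemma 2, part 2): for a function f : {0,1}^d → δℤ and dimensions i ≠ j, let f' be obtained from f by repeatedly applying the asymmetric basic operator B_i until no violated edges remain along dimension i, and let A_i[f] = R[f'] where R rounds values to the nearest multiple of δ. Then VS_j(A_i[f]) ≤ VS_j(f) + δ, where VS_j is the total violation score along dimension j. -/
open scoped Classical

noncomputable def phi (t : ℝ) : ℝ := max 0 (|t| - 1)

lemma phi_neg (t : ℝ) : phi (-t) = phi t := by simp [phi]

lemma phi_convex : ConvexOn ℝ Set.univ phi := by
  have h1 : ConvexOn ℝ Set.univ (fun t : ℝ => |t| - 1) := by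
    have := (convexOn_univ_norm (E := ℝ)).add_const (-1)
    refine this.congr ?_
    intro t _; simp [Real.norm_eq_abs, sub_eq_add_neg]
  exact (convexOn_const (0:ℝ) convex_univ).sup h1

lemma shape (a b u v wa wb : ℝ) (ha : 0 < a) (hb : 0 < b)
    (huv : u + a + b ≤ v) (hwa : 0 < wa) (hwb : 0 < wb) (hw : wa * a = wb * b) :
    wa * (phi (u + a) - phi u) ≤ wb * (phi v - phi (v - b)) := by
  have h1 : (phi (u+a) - phi u) / ((u+a) - u) ≤ (phi (v-b) - phi u) / ((v-b) - u) := by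
    apply phi_convex.secant_mono (Set.mem_univ u) (Set.mem_univ _) (Set.mem_univ _)
      (by intro h; nlinarith [congrArg id h]) (by intro h; nlinarith [congrArg id h])
      (by linarith)
  have h2 : (phi u - phi (v-b)) / (u - (v-b)) ≤ (phi v - phi (v-b)) / (v - (v-b)) := by
    apply phi_convex.secant_mono (Set.mem_univ (v-b)) (Set.mem_univ _) (Set.mem_univ _)
      (by intro h; nlinarith [congrArg id h]) (by intro h; nlinarith [congrArg id h])
      (by linarith)
  have e1 : (phi u - phi (v-b)) / (u - (v-b)) = (phi (v-b) - phi u) / ((v-b) - u) := by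
    rw [← neg_div_neg_eq]; ring_nf
  rw [e1] at h2
  have h3 : (phi (u+a) - phi u) / a ≤ (phi v - phi (v-b)) / b := by
    calc (phi (u+a) - phi u) / a = (phi (u+a) - phi u) / ((u+a) - u) := by ring_nf
    _ ≤ (phi (v-b) - phi u) / ((v-b) - u) := h1
    _ ≤ (phi v - phi (v-b)) / (v - (v-b)) := h2
    _ = (phi v - phi (v-b)) / b := by ring_nf
  rw [div_le_div_iff₀ ha hb] at h3
  have h4 : wb * ((phi (u+a) - phi u) * b) ≤ wb * ((phi v - phi (v-b)) * a) :=
    mul_le_mul_of_nonneg_left h3 hwb.le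
  have h5 : wa * (phi (u+a) - phi u) * a = wb * ((phi (u+a) - phi u) * b) := by
    linear_combination (phi (u+a) - phi u) * hw
  have h6 : wa * (phi (u+a) - phi u) * a ≤ wb * (phi v - phi (v-b)) * a := by
    rw [h5]; linarith
  exact le_of_mul_le_mul_right h6 ha

lemma core (q δ u v u' v' : ℝ) (hq : 0 < q) (hq1 : q < 1) (hδ : 0 < δ)
    (hcase : (u' = u ∧ v' = v) ∨
      (u' = u + q*δ ∧ v' = v - (1-q)*δ ∧ δ ≤ v - u) ∨
      (u' = u - q*δ ∧ v' = v + (1-q)*δ ∧ δ ≤ u - v) ∨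
      (u' = u + 2*(q*δ) ∧ v' = v - 2*((1-q)*δ) ∧ 2*δ ≤ v - u) ∨
      (u' = u - 2*(q*δ) ∧ v' = v + 2*((1-q)*δ) ∧ 2*δ ≤ u - v)) :
    (1-q) * phi u' + q * phi v' ≤ (1-q) * phi u + q * phi v := by
  have hq' : (0:ℝ) < 1 - q := by linarith
  rcases hcase with ⟨h1, h2⟩ | ⟨h1, h2, h3⟩ | ⟨h1, h2, h3⟩ | ⟨h1, h2, h3⟩ | ⟨h1, h2, h3⟩
  · rw [h1, h2]
  · subst h1 h2
    have := shape (q*δ) ((1-q)*δ) u v (1-q) q (by positivity) (by positivity)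
      (by linarith) hq' hq (by ring)
    linarith
  · subst h1 h2
    have := shape (q*δ) ((1-q)*δ) (-u) (-v) (1-q) q (by positivity) (by positivity)
      (by linarith) hq' hq (by ring)
    have e1 : phi (-u + q*δ) = phi (u - q*δ) := by rw [← phi_neg (u - q*δ)]; ring_nf
    have e2 : phi (-v - (1-q)*δ) = phi (v + (1-q)*δ) := by rw [← phi_neg (v + (1-q)*δ)]; ring_nf
    rw [e1, e2, phi_neg, phi_neg] at this
    linarith
  · subst h1 h2
    have := shape (2*(q*δ)) (2*((1-q)*δ)) u v (1-q) q (by positivity) (by positivity)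
      (by linarith) hq' hq (by ring)
    linarith
  · subst h1 h2
    have := shape (2*(q*δ)) (2*((1-q)*δ)) (-u) (-v) (1-q) q (by positivity) (by positivity)
      (by linarith) hq' hq (by ring)
    have e1 : phi (-u + 2*(q*δ)) = phi (u - 2*(q*δ)) := by rw [← phi_neg (u - 2*(q*δ))]; ring_nf
    have e2 : phi (-v - 2*((1-q)*δ)) = phi (v + 2*((1-q)*δ)) := by
      rw [← phi_neg (v + 2*((1-q)*δ))]; ring_nf
    rw [e1, e2, phi_neg, phi_neg] at this
    linarith

lemma gap {δ x : ℝ} (hδ : 0 < δ) (h1 : ∃ m:ℤ, (m:ℝ)*δ = 1) (hx : ∃ n:ℤ, x = n*δ)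
    (h : 1 < x) : 1 + δ ≤ x := by
  obtain ⟨m, hm⟩ := h1; obtain ⟨n, hn⟩ := hx
  have hmn : (m:ℝ)*δ < (n:ℝ)*δ := by rw [hm, ← hn]; exact h
  have h2 : m < n := by
    by_contra hc
    push_neg at hc
    have : (n:ℝ)*δ ≤ (m:ℝ)*δ := mul_le_mul_of_nonneg_right (by exact_mod_cast hc) hδ.le
    linarith
  have h3 : ((m+1 : ℤ):ℝ) * δ ≤ (n:ℝ)*δ := by
    apply mul_le_mul_of_nonneg_right _ hδ.le
    exact_mod_cast h2
  push_cast at h3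
  rw [hn]; linarith [hm]

lemma square (q δ ga gb gc gd : ℝ) (hq : 0 < q) (hq1 : q < 1) (hδ : 0 < δ)
    (h1 : ∃ m:ℤ, (m:ℝ)*δ = 1) (hab : ∃ n:ℤ, gb - ga = n*δ) (hcd : ∃ n:ℤ, gd - gc = n*δ) :
    (1-q) * phi ((if ga < gb - 1 then ga + q*δ else if gb < ga - 1 then ga - q*δ else ga)
      - (if gc < gd - 1 then gc + q*δ else if gd < gc - 1 then gc - q*δ else gc))
    + q * phi ((if gb < ga - 1 then gb + (1-q)*δ else if ga < gb - 1 then gb - (1-q)*δ else gb)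
      - (if gd < gc - 1 then gd + (1-q)*δ else if gc < gd - 1 then gd - (1-q)*δ else gd))
    ≤ (1-q) * phi (ga - gc) + q * phi (gb - gd) := by
  have gAB : ga < gb - 1 → 1 + δ ≤ gb - ga := fun h => gap hδ h1 hab (by linarith)
  have gBA : gb < ga - 1 → 1 + δ ≤ ga - gb := fun h => by
    obtain ⟨n, hn⟩ := hab
    exact gap hδ h1 ⟨-n, by push_cast; linarith⟩ (by linarith)
  have gCD : gc < gd - 1 → 1 + δ ≤ gd - gc := fun h => gap hδ h1 hcd (by linarith)
  have gDC : gd < gc - 1 → 1 + δ ≤ gc - gd := fun h => by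
    obtain ⟨n, hn⟩ := hcd
    exact gap hδ h1 ⟨-n, by push_cast; linarith⟩ (by linarith)
  by_cases hA : ga < gb - 1 <;> by_cases hB : gb < ga - 1 <;>
    by_cases hC : gc < gd - 1 <;> by_cases hD : gd < gc - 1 <;>
    (try (exfalso; linarith)) <;>
    (try replace gAB := gAB hA) <;> (try replace gBA := gBA hB) <;>
    (try replace gCD := gCD hC) <;> (try replace gDC := gDC hD) <;>
    simp only [hA, hB, hC, hD, if_true, if_false] <;>
    apply core q δ (ga-gc) (gb-gd) _ _ hq hq1 hδ <;>
    first
    | (left; constructor <;> ring1)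
    | (right; left; refine ⟨?_, ?_, ?_⟩ <;> first | ring1 | linarith)
    | (right; right; left; refine ⟨?_, ?_, ?_⟩ <;> first | ring1 | linarith)
    | (right; right; right; left; refine ⟨?_, ?_, ?_⟩ <;> first | ring1 | linarith)
    | (right; right; right; right; refine ⟨?_, ?_, ?_⟩ <;> first | ring1 | linarith)


section Aux
variable {d : ℕ}

lemma vmass_pos {p : Fin d → ℝ} (hp : ∀ l, 0 < p l ∧ p l < 1) (x : Fin d → Bool) :
    0 < vmass p x := by
  apply Finset.prod_pos
  intro l _
  by_cases h : x l <;> simp [h] <;> [exact (hp l).1; linarith [(hp l).2]]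

lemma sum_vmass {p : Fin d → ℝ} :
    ∑ x : Fin d → Bool, vmass p x = 1 := by
  have h := Finset.prod_univ_sum (κ := fun _ : Fin d => Bool)
    (t := fun _ => (Finset.univ : Finset Bool))
    (f := fun l b => if b then p l else 1 - p l)
  rw [Fintype.piFinset_univ] at h
  unfold vmass
  rw [← h]
  have : ∀ l : Fin d, (∑ b : Bool, if b then p l else 1 - p l) = 1 := by
    intro l; simp
  simp only [this, Finset.prod_const_one]

lemma vmass_update {p : Fin d → ℝ} {i : Fin d} {x : Fin d → Bool} (hx : x i = false) :
    p i * vmass p x = (1 - p i) * vmass p (Function.update x i true) := by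
  have h1 : vmass p x
      = (if x i then p i else 1 - p i) * ∏ l ∈ Finset.univ.erase i, (if x l then p l else 1 - p l) :=
    (Finset.mul_prod_erase _ _ (Finset.mem_univ i)).symm
  have h2 : vmass p (Function.update x i true)
      = (if Function.update x i true i then p i else 1 - p i) *
        ∏ l ∈ Finset.univ.erase i, (if Function.update x i true l then p l else 1 - p l) :=
    (Finset.mul_prod_erase _ _ (Finset.mem_univ i)).symm
  have h3 : ∏ l ∈ Finset.univ.erase i, (if Function.update x i true l then p l else 1 - p l)
      = ∏ l ∈ Finset.univ.erase i, (if x l then p l else 1 - p l) := by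
    apply Finset.prod_congr rfl
    intro l hl
    rw [Function.update_of_ne (Finset.ne_of_mem_erase hl)]
  rw [h1, h2, h3, hx, Function.update_self]
  simp only [if_true, if_false, Bool.false_eq_true]
  ring

lemma sum_split (l : Fin d) (P : (Fin d → Bool) → Prop) [DecidablePred P]
    (hP : ∀ (x : Fin d → Bool) b, P (Function.update x l b) ↔ P x)
    (F : (Fin d → Bool) → ℝ) :
    ∑ x ∈ Finset.univ.filter (fun x => P x), F x
      = ∑ x ∈ Finset.univ.filter (fun x => P x ∧ x l = false),
          (F x + F (Function.update x l true)) := by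
  rw [Finset.sum_add_distrib]
  rw [← Finset.sum_filter_add_sum_filter_not (Finset.univ.filter (fun x => P x))
    (fun x => x l = false) F]
  rw [Finset.filter_filter, Finset.filter_filter]
  congr 1
  apply Finset.sum_nbij' (i := fun x => Function.update x l false)
    (j := fun x => Function.update x l true)
  · intro a ha
    simp only [Finset.mem_filter, Finset.mem_univ, true_and] at ha ⊢
    exact ⟨(hP a false).mpr ha.1, Function.update_self l false a⟩
  · intro a ha
    simp only [Finset.mem_filter, Finset.mem_univ, true_and] at ha ⊢
    refine ⟨(hP a true).mpr ha.1, by simp [Function.update_self]⟩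
  · intro a ha
    simp only [Finset.mem_filter, Finset.mem_univ, true_and] at ha
    have : a l = true := by simpa using ha.2
    rw [Function.update_idem, ← this, Function.update_eq_self]
  · intro a ha
    simp only [Finset.mem_filter, Finset.mem_univ, true_and] at ha
    rw [Function.update_idem, ← ha.2, Function.update_eq_self]
  · intro a ha
    simp only [Finset.mem_filter, Finset.mem_univ, true_and] at ha
    have : a l = true := by simpa using ha.2
    have e1 : Function.update (Function.update a l false) l true = a := by
      rw [Function.update_idem, ← this, Function.update_eq_self]
    rw [e1]

end Aux

/-- One (parallel) application of the asymmetric basic operator `B_i` along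
dimension `i`: on each violated dimension-`i` edge `{x,y}` with `f x < f y − 1`,
if `H(x) > H(y)` then `f x` increases by `(1−p_i)δ` and `f y` decreases by
`p_i δ`; if `H(x) < H(y)` then `f x` increases by `p_i δ` and `f y` decreases by
`(1−p_i)δ`.  (On a dimension-`i` edge, `H(x) > H(y)` iff `x i = true`.) -/
noncomputable def Bstep {d : ℕ} (δ pi : ℝ) (i : Fin d)
    (f : (Fin d → Bool) → ℝ) : (Fin d → Bool) → ℝ := fun x =>
  let y := Function.update x i (!x i)
  if f x < f y - 1 then
    (if x i then f x + (1 - pi) * δ else f x + pi * δ)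
  else if f y < f x - 1 then
    (if x i then f x - (1 - pi) * δ else f x - pi * δ)
  else f x

section BstepLemmas
variable {d : ℕ} {δ q : ℝ} {i : Fin d} {g : (Fin d → Bool) → ℝ}

lemma update_true_false {x : Fin d → Bool} {i : Fin d} (hx : x i = false) :
    Function.update (Function.update x i true) i false = x := by
  rw [Function.update_idem, ← hx, Function.update_eq_self]

lemma Bstep_low {x : Fin d → Bool} (hx : x i = false) :
    Bstep δ q i g x =
      (if g x < g (Function.update x i true) - 1 then g x + q*δ
       else if g (Function.update x i true) < g x - 1 then g x - q*δ else g x) := by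
  unfold Bstep
  simp only [hx, Bool.not_false, Bool.false_eq_true, if_false]

lemma Bstep_high {x : Fin d → Bool} (hx : x i = false) :
    Bstep δ q i g (Function.update x i true) =
      (if g (Function.update x i true) < g x - 1 then g (Function.update x i true) + (1-q)*δ
       else if g x < g (Function.update x i true) - 1 then g (Function.update x i true) - (1-q)*δ
       else g (Function.update x i true)) := by
  unfold Bstep
  simp only [Function.update_self, Bool.not_true, update_true_false hx, if_true]

end BstepLemmas

/-- Rounding a real to the nearest multiple of `δ`. -/
noncomputable def rnd (δ v : ℝ) : ℝ := δ * ⌊v / δ + 1 / 2⌋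

/-- Violation score along dimension `j`. -/
noncomputable def VS {d : ℕ} (p : Fin d → ℝ) (j : Fin d)
    (f : (Fin d → Bool) → ℝ) : ℝ :=
  ∑ x ∈ Finset.univ.filter (fun x : Fin d → Bool => x j = false),
    max 0 ((vmass p x + vmass p (Function.update x j true)) *
      (|f x - f (Function.update x j true)| - 1))

section Main
variable {d : ℕ}

def Qprop {d : ℕ} (δ : ℝ) (i : Fin d) (g : (Fin d → Bool) → ℝ) : Prop :=
  ∀ x : Fin d → Bool, x i = false → ∃ n : ℤ, g (Function.update x i true) - g x = n * δ

lemma Qprop_Bstep {δ q : ℝ} {i : Fin d} {g : (Fin d → Bool) → ℝ}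
    (hQ : Qprop δ i g) : Qprop δ i (Bstep δ q i g) := by
  intro x hx
  obtain ⟨n, hn⟩ := hQ x hx
  rw [Bstep_low hx, Bstep_high hx]
  by_cases h1 : g x < g (Function.update x i true) - 1 <;>
    by_cases h2 : g (Function.update x i true) < g x - 1 <;>
    simp only [h1, h2, if_true, if_false]
  · exfalso; linarith
  · exact ⟨n - 1, by push_cast; linarith⟩
  · exact ⟨n + 1, by push_cast; linarith⟩
  · exact ⟨n, by push_cast; linarith⟩

lemma VS_Bstep {δ : ℝ} {p : Fin d → ℝ} {i j : Fin d} (hij : i ≠ j)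
    (hδ : 0 < δ) (hδint : ∃ n : ℤ, (n : ℝ) * δ = 1)
    (hp : ∀ l, 0 < p l ∧ p l < 1)
    {g : (Fin d → Bool) → ℝ} (hQ : Qprop δ i g) :
    VS p j (Bstep δ (p i) i g) ≤ VS p j g := by
  unfold VS
  have hup : ∀ (x : Fin d → Bool) (b : Bool), Function.update x i b j = x j :=
    fun x b => Function.update_of_ne (Ne.symm hij) _ _
  rw [sum_split i (fun x => x j = false) (fun x b => by simp [hup x b]) _,
      sum_split i (fun x => x j = false) (fun x b => by simp [hup x b]) _]
  apply Finset.sum_le_sum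
  intro x hx
  simp only [Finset.mem_filter, Finset.mem_univ, true_and] at hx
  obtain ⟨hxj, hxi⟩ := hx
  have hq0 : 0 < p i := (hp i).1
  have hq1 : p i < 1 := (hp i).2
  have hq1' : (0:ℝ) < 1 - p i := by linarith
  have hci : (Function.update x j true) i = false := by
    rw [Function.update_of_ne hij, hxi]
  have hcd : Function.update (Function.update x j true) i true
      = Function.update (Function.update x i true) j true :=
    Function.update_comm (Ne.symm hij) _ _ _
  have h0a := vmass_pos hp x
  have h0c := vmass_pos hp (Function.update x j true)
  have h0b := vmass_pos hp (Function.update x i true)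
  have h0d := vmass_pos hp (Function.update (Function.update x i true) j true)
  have hWa : 0 < vmass p x + vmass p (Function.update x j true) := by linarith
  have hWb : 0 < vmass p (Function.update x i true)
      + vmass p (Function.update (Function.update x i true) j true) := by linarith
  have hrel : p i * (vmass p x + vmass p (Function.update x j true))
      = (1 - p i) * (vmass p (Function.update x i true)
        + vmass p (Function.update (Function.update x i true) j true)) := by
    have r1 := vmass_update (p := p) (i := i) (x := x) hxi
    have r2 := vmass_update (p := p) (i := i) (x := Function.update x j true) hci
    rw [hcd] at r2
    linarith
  have Ephi : ∀ W t : ℝ, 0 < W → max 0 (W * (|t| - 1)) = W * phi t := by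
    intro W t hW
    rw [phi, mul_max_of_nonneg _ _ hW.le, mul_zero]
  -- rewrite the four Bstep values
  have e1 := Bstep_low (δ := δ) (q := p i) (g := g) hxi
  have e2 := Bstep_high (δ := δ) (q := p i) (g := g) hxi
  have e3 := Bstep_low (δ := δ) (q := p i) (g := g) hci
  have e4 := Bstep_high (δ := δ) (q := p i) (g := g) hci
  rw [hcd] at e3 e4
  -- the second VS term at (update x i true) pairs with update _ j true
  rw [Ephi _ _ hWa, Ephi _ _ hWb, Ephi _ _ hWa, Ephi _ _ hWb, e1, e2, e3, e4]
  -- abbreviate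
  set ga := g x
  set gb := g (Function.update x i true)
  set gc := g (Function.update x j true)
  set gd := g (Function.update (Function.update x i true) j true)
  have habδ : ∃ n : ℤ, gb - ga = n * δ := hQ x hxi
  have hcdδ : ∃ n : ℤ, gd - gc = n * δ := by
    have h := hQ (Function.update x j true) hci
    rwa [hcd] at h
  have S := square (p i) δ ga gb gc gd hq0 hq1 hδ hδint habδ hcdδ
  set V := (vmass p x + vmass p (Function.update x j true)) / (1 - p i) with hV
  have hV0 : 0 ≤ V := by positivity
  have hWaV : vmass p x + vmass p (Function.update x j true) = (1 - p i) * V := by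
    rw [hV]; field_simp
  have hWbV : vmass p (Function.update x i true)
      + vmass p (Function.update (Function.update x i true) j true) = p i * V := by
    rw [hV]; field_simp; linarith [hrel]
  rw [hWaV, hWbV]
  have := mul_le_mul_of_nonneg_left S hV0
  nlinarith [this]

end Main

section Round
variable {d : ℕ}

lemma rnd_close (δ v : ℝ) (hδ : 0 < δ) : |rnd δ v - v| ≤ δ / 2 := by
  unfold rnd
  have h1 : (⌊v / δ + 1/2⌋ : ℝ) ≤ v / δ + 1/2 := Int.floor_le _
  have h2 : v / δ + 1/2 - 1 < ⌊v / δ + 1/2⌋ := Int.sub_one_lt_floor _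
  rw [abs_le]
  constructor
  · have := mul_le_mul_of_nonneg_left h2.le hδ.le
    have hv : δ * (v / δ) = v := by field_simp
    nlinarith
  · have := mul_le_mul_of_nonneg_left h1 hδ.le
    have hv : δ * (v / δ) = v := by field_simp
    nlinarith

lemma mass_pair_sum {p : Fin d → ℝ} (j : Fin d) :
    ∑ x ∈ Finset.univ.filter (fun x : Fin d → Bool => x j = false),
      (vmass p x + vmass p (Function.update x j true)) = 1 := by
  have h := sum_split j (fun _ => True) (fun _ _ => Iff.rfl) (vmass p)
  simp only [Finset.filter_true, true_and] at h
  rw [sum_vmass] at h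
  rw [← h]

lemma VS_rnd {p : Fin d → ℝ} (hp : ∀ l, 0 < p l ∧ p l < 1) {δ : ℝ} (hδ : 0 < δ) (j : Fin d)
    (g : (Fin d → Bool) → ℝ) :
    VS p j (fun x => rnd δ (g x)) ≤ VS p j g + δ := by
  unfold VS
  have key : ∀ x ∈ Finset.univ.filter (fun x : Fin d → Bool => x j = false),
      max 0 ((vmass p x + vmass p (Function.update x j true)) *
        (|rnd δ (g x) - rnd δ (g (Function.update x j true))| - 1))
      ≤ max 0 ((vmass p x + vmass p (Function.update x j true)) *
        (|g x - g (Function.update x j true)| - 1))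
        + (vmass p x + vmass p (Function.update x j true)) * δ := by
    intro x _
    set W := vmass p x + vmass p (Function.update x j true) with hW
    have hW0 : 0 < W := by
      have := vmass_pos hp x
      have := vmass_pos hp (Function.update x j true)
      linarith
    set y := Function.update x j true
    have b1 := rnd_close δ (g x) hδ
    have b2 := rnd_close δ (g y) hδ
    have tri : |rnd δ (g x) - rnd δ (g y)| ≤ |g x - g y| + δ := by
      have t1 := abs_sub_le (rnd δ (g x)) (g x) (rnd δ (g y))
      have t2 := abs_sub_le (g x) (g y) (rnd δ (g y))
      have t3 : |g y - rnd δ (g y)| = |rnd δ (g y) - g y| := abs_sub_comm _ _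
      linarith
    apply max_le
    · have h0 : (0:ℝ) ≤ max 0 (W * (|g x - g y| - 1)) := le_max_left _ _
      nlinarith [mul_nonneg hW0.le hδ.le]
    · have h1 : W * (|rnd δ (g x) - rnd δ (g y)| - 1) ≤ W * (|g x - g y| - 1) + W * δ := by
        nlinarith
      have h2 : W * (|g x - g y| - 1) ≤ max 0 (W * (|g x - g y| - 1)) := le_max_right _ _
      linarith
  calc ∑ x ∈ Finset.univ.filter (fun x : Fin d → Bool => x j = false),
        max 0 ((vmass p x + vmass p (Function.update x j true)) *
          (|rnd δ (g x) - rnd δ (g (Function.update x j true))| - 1))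
      ≤ ∑ x ∈ Finset.univ.filter (fun x : Fin d → Bool => x j = false),
        (max 0 ((vmass p x + vmass p (Function.update x j true)) *
          (|g x - g (Function.update x j true)| - 1))
          + (vmass p x + vmass p (Function.update x j true)) * δ) :=
        Finset.sum_le_sum key
    _ = (∑ x ∈ Finset.univ.filter (fun x : Fin d → Bool => x j = false),
          max 0 ((vmass p x + vmass p (Function.update x j true)) *
            (|g x - g (Function.update x j true)| - 1)))
        + (∑ x ∈ Finset.univ.filter (fun x : Fin d → Bool => x j = false),
            (vmass p x + vmass p (Function.update x j true))) * δ := by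
        rw [Finset.sum_add_distrib, Finset.sum_mul]
    _ = (∑ x ∈ Finset.univ.filter (fun x : Fin d → Bool => x j = false),
          max 0 ((vmass p x + vmass p (Function.update x j true)) *
            (|g x - g (Function.update x j true)| - 1))) + δ := by
        rw [mass_pair_sum j, one_mul]

end Round

/-- Repair operator accounting (Lemma 2, part 2): if `f'` is obtained from a
`δℤ`-valued `f` by repeatedly applying the asymmetric basic operator `B_i` until
no violated dimension-`i` edges remain, and `A_i[f]` rounds `f'` to the nearest
multiples of `δ`, then `VS_j(A_i[f]) ≤ VS_j(f) + δ` for every `j ≠ i`. -/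
theorem repair_operator_accounting {d k : ℕ} (i j : Fin d) (hij : i ≠ j)
    (δ : ℝ) (hδ : 0 < δ ∧ δ ≤ 1) (hδint : ∃ n : ℤ, (n : ℝ) * δ = 1)
    (p : Fin d → ℝ) (hp : ∀ l, 0 < p l ∧ p l < 1)
    (f : (Fin d → Bool) → ℝ) (hf : ∀ x, ∃ n : ℤ, f x = n * δ)
    (hk : ∀ x : Fin d → Bool,
      |(Bstep δ (p i) i)^[k] f x -
        (Bstep δ (p i) i)^[k] f (Function.update x i (!x i))| ≤ 1) :
    VS p j (fun x => rnd δ ((Bstep δ (p i) i)^[k] f x)) ≤ VS p j f + δ := by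
  obtain ⟨hδ0, hδ1⟩ := hδ
  have hiter : ∀ m : ℕ, Qprop δ i ((Bstep δ (p i) i)^[m] f)
      ∧ VS p j ((Bstep δ (p i) i)^[m] f) ≤ VS p j f := by
    intro m
    induction m with
    | zero =>
      refine ⟨?_, le_refl _⟩
      intro x _
      obtain ⟨n1, h1⟩ := hf (Function.update x i true)
      obtain ⟨n2, h2⟩ := hf x
      exact ⟨n1 - n2, by push_cast; simp only [Function.iterate_zero, id_eq]; rw [h1, h2]; ring⟩
    | succ m ih =>
      rw [Function.iterate_succ_apply']
      exact ⟨Qprop_Bstep ih.1, le_trans (VS_Bstep hij hδ0 hδint hp ih.1) ih.2⟩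
  calc VS p j (fun x => rnd δ ((Bstep δ (p i) i)^[k] f x))
      ≤ VS p j ((Bstep δ (p i) i)^[k] f) + δ := VS_rnd hp hδ0 j _
    _ ≤ VS p j f + δ := by linarith [(hiter k).2]
end

section
/- Square-preservation of violation score: consider a 2-dimensional square with vertices x_b, x_t, y_b, y_t in {0,1}^d where y_t = x_t + e_i = y_b + e_j, x_t = x_b + e_j, y_b = x_b + e_i (so H(y_t) = H(x_t)+1 = H(y_b)+1 = H(x_b)+2). Suppose one application of the asymmetric basic operator B_i along dimension i (modifying the i-edges {x_b,y_b} and {x_t,y_t} if violated, per the asymmetric update rule) increases the violation score of the j-edge {x_b,x_t}. Then the violation score of the j-edge {y_b,y_t} decreases by at least as much, so vs({x_b,x_t}) + vs({y_b,y_t}) does not increase. -/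
/-- If values are in δℤ with 1/δ ∈ ℤ and u < v - 1, then u + 1 + δ ≤ v. -/
lemma delta_step (δ u v : ℝ) (hδ : 0 < δ)
    (hu : ∃ n : ℤ, u = n * δ) (hv : ∃ n : ℤ, v = n * δ)
    (hk : ∃ n : ℤ, (n : ℝ) * δ = 1) (h : u < v - 1) : u + 1 + δ ≤ v := by
  obtain ⟨m, hm⟩ := hu
  obtain ⟨n, hn⟩ := hv
  obtain ⟨k, hk⟩ := hk
  have h1 : ((m + k : ℤ) : ℝ) * δ < (n : ℝ) * δ := by push_cast; nlinarith
  have h2 : (m + k : ℤ) < n := by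
    have := lt_of_mul_lt_mul_right h1 hδ.le
    exact_mod_cast this
  have h3 : ((m : ℝ) + k + 1) ≤ n := by exact_mod_cast (by omega : (m + k + 1 : ℤ) ≤ n)
  have h4 := mul_le_mul_of_nonneg_right h3 hδ.le
  nlinarith

/-- From a strict increase of the violation score and a' = a + t with t ≥ 0,
deduce 1 < a'. -/
lemma vs_dir (Px t a a' : ℝ) (hPx : 0 < Px) (ht : 0 ≤ t) (ha' : a' = a + t)
    (hinc : max 0 (Px * (|a| - 1)) < max 0 (Px * (|a'| - 1))) : 1 < a' := by
  have h0m : 0 < max 0 (Px * (|a'| - 1)) := lt_of_le_of_lt (le_max_left _ _) hinc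
  have h0 : 0 < Px * (|a'| - 1) := by
    by_contra h
    push_neg at h
    rw [max_eq_left h] at h0m
    exact lt_irrefl _ h0m
  have h1 : 1 < |a'| := by nlinarith
  have h2 : Px * (|a| - 1) < Px * (|a'| - 1) :=
    lt_of_le_of_lt (le_max_right _ _) (by rwa [max_eq_right h0.le] at hinc)
  have h3 : |a| < |a'| := by nlinarith
  by_contra h
  push_neg at h
  have ha'neg : a' < -1 := by
    rcases abs_cases a' with ⟨h4, _⟩ | ⟨h4, _⟩ <;> linarith
  have h5 : |a'| = -a' := abs_of_neg (by linarith)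
  have h6 : -|a| ≤ a := neg_abs_le a
  linarith

lemma vs_dir_neg (Px t a a' : ℝ) (hPx : 0 < Px) (ht : 0 ≤ t) (ha' : a' = a - t)
    (hinc : max 0 (Px * (|a| - 1)) < max 0 (Px * (|a'| - 1))) : a' < -1 := by
  have := vs_dir Px t (-a) (-a') hPx ht (by rw [ha']; ring)
    (by simpa [abs_neg] using hinc)
  linarith

/-- Key inequality (positive direction). -/
lemma vs_key (Px Py t t' a a' b b' : ℝ) (hPx : 0 < Px) (hPy : 0 < Py)
    (heq : Py * t' = Px * t) (ht' : 0 ≤ t')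
    (ha' : a' = a + t) (hb' : b' = b - t') (ha1 : 1 < a') (hb1 : 1 ≤ b') :
    max 0 (Px * (|a'| - 1)) + max 0 (Py * (|b'| - 1))
      ≤ max 0 (Px * (|a| - 1)) + max 0 (Py * (|b| - 1)) := by
  have ht : 0 ≤ t := by nlinarith
  have hb : 1 ≤ b := by nlinarith
  rw [abs_of_pos (show (0 : ℝ) < a' by linarith),
      abs_of_pos (show (0 : ℝ) < b by linarith),
      abs_of_pos (show (0 : ℝ) < b' by linarith)]
  rw [max_eq_right (show (0 : ℝ) ≤ Px * (a' - 1) by nlinarith),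
      max_eq_right (show (0 : ℝ) ≤ Py * (b - 1) by nlinarith),
      max_eq_right (show (0 : ℝ) ≤ Py * (b' - 1) by nlinarith)]
  have habs : Px * (a - 1) ≤ Px * (|a| - 1) := by nlinarith [le_abs_self a]
  have hm : Px * (|a| - 1) ≤ max 0 (Px * (|a| - 1)) := le_max_right _ _
  subst ha' hb'
  nlinarith

/-- Key inequality (negative direction). -/
lemma vs_key_neg (Px Py t t' a a' b b' : ℝ) (hPx : 0 < Px) (hPy : 0 < Py)
    (heq : Py * t' = Px * t) (ht' : 0 ≤ t')
    (ha' : a' = a - t) (hb' : b' = b + t') (ha1 : a' < -1) (hb1 : b' ≤ -1) :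
    max 0 (Px * (|a'| - 1)) + max 0 (Py * (|b'| - 1))
      ≤ max 0 (Px * (|a| - 1)) + max 0 (Py * (|b| - 1)) := by
  have := vs_key Px Py t t' (-a) (-a') (-b) (-b') hPx hPy heq ht'
    (by rw [ha']; ring) (by rw [hb']; ring) (by linarith) (by linarith)
  simpa [abs_neg] using this

/-- Square-preservation of the violation score: on a 2-dimensional square of the
hypercube with function values `xb, xt, yb, yt` (at `x_b, x_t = x_b+e_j,
y_b = x_b+e_i, y_t = x_b+e_i+e_j`, all values in `δℤ`) and vertex masses
`pxb, pxt, pyb = pxb·p_i/(1−p_i), pyt = pxt·p_i/(1−p_i)`, if one application of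
the asymmetric basic operator `B_i` along dimension `i` (modifying the `i`-edges
`{x_b,y_b}` and `{x_t,y_t}` if violated) increases the violation score of the
`j`-edge `{x_b,x_t}`, then the violation score of `{y_b,y_t}` decreases by at
least as much: the sum of the two `j`-edge violation scores does not increase. -/
theorem square_violation_score_preserved
    (δ pi pxb pxt pyb pyt xb xt yb yt xb' xt' yb' yt' : ℝ)
    (hδ : 0 < δ ∧ δ ≤ 1) (hδint : ∃ n : ℤ, (n : ℝ) * δ = 1)
    (hpi : 0 < pi ∧ pi < 1) (hpxb : 0 < pxb) (hpxt : 0 < pxt)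
    (hpyb : pyb = pxb * pi / (1 - pi)) (hpyt : pyt = pxt * pi / (1 - pi))
    (hxb : ∃ n : ℤ, xb = n * δ) (hxt : ∃ n : ℤ, xt = n * δ)
    (hyb : ∃ n : ℤ, yb = n * δ) (hyt : ∃ n : ℤ, yt = n * δ)
    (hxb' : xb' = if xb < yb - 1 then xb + pi * δ
      else if yb < xb - 1 then xb - pi * δ else xb)
    (hyb' : yb' = if xb < yb - 1 then yb - (1 - pi) * δ
      else if yb < xb - 1 then yb + (1 - pi) * δ else yb)
    (hxt' : xt' = if xt < yt - 1 then xt + pi * δ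
      else if yt < xt - 1 then xt - pi * δ else xt)
    (hyt' : yt' = if xt < yt - 1 then yt - (1 - pi) * δ
      else if yt < xt - 1 then yt + (1 - pi) * δ else yt)
    (hinc : max 0 ((pxb + pxt) * (|xb - xt| - 1))
      < max 0 ((pxb + pxt) * (|xb' - xt'| - 1))) :
    max 0 ((pxb + pxt) * (|xb' - xt'| - 1)) + max 0 ((pyb + pyt) * (|yb' - yt'| - 1))
      ≤ max 0 ((pxb + pxt) * (|xb - xt| - 1)) + max 0 ((pyb + pyt) * (|yb - yt| - 1)) := by
  obtain ⟨hδ0, hδ1⟩ := hδ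
  obtain ⟨hpi0, hpi1⟩ := hpi
  have h1pi : (0 : ℝ) < 1 - pi := by linarith
  have hPx : 0 < pxb + pxt := by linarith
  have hPy : 0 < pyb + pyt := by
    rw [hpyb, hpyt]; positivity
  have hexp : (1 - pi) * δ = δ - pi * δ := by ring
  have heq1 : (pyb + pyt) * ((1 - pi) * δ) = (pxb + pxt) * (pi * δ) := by
    rw [hpyb, hpyt]; field_simp
  have heq2 : (pyb + pyt) * (2 * ((1 - pi) * δ)) = (pxb + pxt) * (2 * (pi * δ)) := by
    rw [hpyb, hpyt]; field_simp
  have ht1 : (0 : ℝ) ≤ pi * δ := mul_nonneg hpi0.le hδ0.le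
  have ht1' : (0 : ℝ) ≤ (1 - pi) * δ := mul_nonneg h1pi.le hδ0.le
  have ht2 : (0 : ℝ) ≤ 2 * (pi * δ) := by linarith
  have ht2' : (0 : ℝ) ≤ 2 * ((1 - pi) * δ) := by linarith
  by_cases c1 : xb < yb - 1
  · rw [if_pos c1] at hxb' hyb'
    have hs1 : xb + 1 + δ ≤ yb := delta_step δ xb yb hδ0 hxb hyb hδint c1
    by_cases c3 : xt < yt - 1
    · -- (A,A): x-edge diff unchanged, contradiction
      rw [if_pos c3] at hxt' hyt'
      exfalso
      have hx : xb' - xt' = xb - xt := by rw [hxb', hxt']; ring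
      rw [hx] at hinc; exact lt_irrefl _ hinc
    · rw [if_neg c3] at hxt' hyt'
      push_neg at c3
      by_cases c4 : yt < xt - 1
      · -- (A,B)
        rw [if_pos c4] at hxt' hyt'
        have hs2 : yt + 1 + δ ≤ xt := delta_step δ yt xt hδ0 hyt hxt hδint c4
        have ha' : xb' - xt' = (xb - xt) + 2 * (pi * δ) := by rw [hxb', hxt']; ring
        have ha1 : 1 < xb' - xt' := vs_dir _ _ _ _ hPx ht2 ha' hinc
        have hb' : yb' - yt' = (yb - yt) - 2 * ((1 - pi) * δ) := by rw [hyb', hyt']; ring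
        have hb1 : 1 ≤ yb' - yt' := by rw [hb']; linarith
        exact vs_key _ _ _ _ _ _ _ _ hPx hPy heq2 ht2' ha' hb' ha1 hb1
      · -- (A,C)
        rw [if_neg c4] at hxt' hyt'
        push_neg at c4
        have ha' : xb' - xt' = (xb - xt) + pi * δ := by rw [hxb', hxt']; ring
        have ha1 : 1 < xb' - xt' := vs_dir _ _ _ _ hPx ht1 ha' hinc
        have hb' : yb' - yt' = (yb - yt) - (1 - pi) * δ := by rw [hyb', hyt']; ring
        have hb1 : 1 ≤ yb' - yt' := by rw [hb']; linarith
        exact vs_key _ _ _ _ _ _ _ _ hPx hPy heq1 ht1' ha' hb' ha1 hb1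
  · rw [if_neg c1] at hxb' hyb'
    push_neg at c1
    by_cases c2 : yb < xb - 1
    · rw [if_pos c2] at hxb' hyb'
      have hs1 : yb + 1 + δ ≤ xb := delta_step δ yb xb hδ0 hyb hxb hδint c2
      by_cases c3 : xt < yt - 1
      · -- (B,A)
        rw [if_pos c3] at hxt' hyt'
        have hs2 : xt + 1 + δ ≤ yt := delta_step δ xt yt hδ0 hxt hyt hδint c3
        have ha' : xb' - xt' = (xb - xt) - 2 * (pi * δ) := by rw [hxb', hxt']; ring
        have ha1 : xb' - xt' < -1 := vs_dir_neg _ _ _ _ hPx ht2 ha' hinc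
        have hb' : yb' - yt' = (yb - yt) + 2 * ((1 - pi) * δ) := by rw [hyb', hyt']; ring
        have hb1 : yb' - yt' ≤ -1 := by rw [hb']; linarith
        exact vs_key_neg _ _ _ _ _ _ _ _ hPx hPy heq2 ht2' ha' hb' ha1 hb1
      · rw [if_neg c3] at hxt' hyt'
        push_neg at c3
        by_cases c4 : yt < xt - 1
        · -- (B,B): unchanged, contradiction
          rw [if_pos c4] at hxt' hyt'
          exfalso
          have hx : xb' - xt' = xb - xt := by rw [hxb', hxt']; ring
          rw [hx] at hinc; exact lt_irrefl _ hinc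
        · -- (B,C)
          rw [if_neg c4] at hxt' hyt'
          push_neg at c4
          have ha' : xb' - xt' = (xb - xt) - pi * δ := by rw [hxb', hxt']; ring
          have ha1 : xb' - xt' < -1 := vs_dir_neg _ _ _ _ hPx ht1 ha' hinc
          have hb' : yb' - yt' = (yb - yt) + (1 - pi) * δ := by rw [hyb', hyt']; ring
          have hb1 : yb' - yt' ≤ -1 := by rw [hb']; linarith
          exact vs_key_neg _ _ _ _ _ _ _ _ hPx hPy heq1 ht1' ha' hb' ha1 hb1
    · rw [if_neg c2] at hxb' hyb'
      push_neg at c2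
      by_cases c3 : xt < yt - 1
      · -- (C,A)
        rw [if_pos c3] at hxt' hyt'
        have hs2 : xt + 1 + δ ≤ yt := delta_step δ xt yt hδ0 hxt hyt hδint c3
        have ha' : xb' - xt' = (xb - xt) - pi * δ := by rw [hxb', hxt']; ring
        have ha1 : xb' - xt' < -1 := vs_dir_neg _ _ _ _ hPx ht1 ha' hinc
        have hb' : yb' - yt' = (yb - yt) + (1 - pi) * δ := by rw [hyb', hyt']; ring
        have hb1 : yb' - yt' ≤ -1 := by rw [hb']; linarith
        exact vs_key_neg _ _ _ _ _ _ _ _ hPx hPy heq1 ht1' ha' hb' ha1 hb1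
      · rw [if_neg c3] at hxt' hyt'
        push_neg at c3
        by_cases c4 : yt < xt - 1
        · -- (C,B)
          rw [if_pos c4] at hxt' hyt'
          have hs2 : yt + 1 + δ ≤ xt := delta_step δ yt xt hδ0 hyt hxt hδint c4
          have ha' : xb' - xt' = (xb - xt) + pi * δ := by rw [hxb', hxt']; ring
          have ha1 : 1 < xb' - xt' := vs_dir _ _ _ _ hPx ht1 ha' hinc
          have hb' : yb' - yt' = (yb - yt) - (1 - pi) * δ := by rw [hyb', hyt']; ring
          have hb1 : 1 ≤ yb' - yt' := by rw [hb']; linarith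
          exact vs_key _ _ _ _ _ _ _ _ hPx hPy heq1 ht1' ha' hb' ha1 hb1
        · -- (C,C): unchanged, contradiction
          rw [if_neg c4] at hxt' hyt'
          exfalso
          have hx : xb' - xt' = xb - xt := by rw [hxb', hxt']
          rw [hx] at hinc; exact lt_irrefl _ hinc
end
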